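/- Let X = ℝ², θ ∈ [0, π/2), F counter-clockwise rotation by θ, and C = {x ∈ ℝ² : ‖x‖ ≤ 1} the closed unit ball. For x with ‖x‖ > 1, set α = √(‖x‖² − sin²θ) − cos θ. Then α > 0 and y := (1/‖x‖²)(x + α Fx) satisfies ‖y‖ = 1 and Fx = α y + Fy; in particular y is the F-resolvent of N_C applied to x. -/

import Mathlib

open Real

lemma norm_sq_fin2 (v : EuclideanSpace ℝ (Fin 2)) : ‖v‖ ^ 2 = v 0 ^ 2 + v 1 ^ 2 := by
  rw [EuclideanSpace.norm_eq, Real.sq_sqrt (by positivity)]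
  simp [Fin.sum_univ_two, sq_abs]

/-- `F`-projection onto the closed unit ball of `ℝ²` (Euclidean norm), where `F` is the rotation
by `θ ∈ [0, π/2)`: for `‖x‖ > 1`, with `α = √(‖x‖² − sin²θ) − cos θ` one has `α > 0`, and
`y = ‖x‖⁻²(x + αFx)` satisfies `‖y‖ = 1` and `F x = α • y + F y`, i.e. `F x ∈ N_C y + F y`,
so `y` is the `F`-resolvent of `N_C` applied to `x`. -/
theorem stmt_14 (θ : ℝ) (hθ0 : 0 ≤ θ) (hθ1 : θ < π / 2)
    (F : EuclideanSpace ℝ (Fin 2) → EuclideanSpace ℝ (Fin 2))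
    (hF : ∀ v, F v = ![cos θ * v 0 - sin θ * v 1, sin θ * v 0 + cos θ * v 1])
    (x : EuclideanSpace ℝ (Fin 2)) (hx : 1 < ‖x‖)
    (α : ℝ) (hα : α = Real.sqrt (‖x‖ ^ 2 - sin θ ^ 2) - cos θ)
    (y : EuclideanSpace ℝ (Fin 2)) (hy : y = (‖x‖ ^ 2)⁻¹ • (x + α • F x)) :
    0 < α ∧ ‖y‖ = 1 ∧ F x = α • y + F y := by
  have hc : 0 < cos θ := Real.cos_pos_of_mem_Ioo ⟨by linarith [Real.pi_pos], hθ1⟩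
  have hs2 : sin θ ^ 2 + cos θ ^ 2 = 1 := sin_sq_add_cos_sq θ
  have hx2 : 1 < ‖x‖ ^ 2 := by nlinarith
  have hnn : (0:ℝ) ≤ ‖x‖ ^ 2 - sin θ ^ 2 := by nlinarith
  have hsq : Real.sqrt (‖x‖ ^ 2 - sin θ ^ 2) ^ 2 = ‖x‖ ^ 2 - sin θ ^ 2 :=
    Real.sq_sqrt hnn
  have hαpos : 0 < α := by
    have : cos θ < Real.sqrt (‖x‖ ^ 2 - sin θ ^ 2) := by
      rw [show cos θ = Real.sqrt (cos θ ^ 2) from (Real.sqrt_sq hc.le).symm]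
      apply Real.sqrt_lt_sqrt (by positivity)
      nlinarith
    rw [hα]; linarith
  have key : ‖x‖ ^ 2 = α ^ 2 + 2 * α * cos θ + 1 := by
    have : (α + cos θ) ^ 2 = ‖x‖ ^ 2 - sin θ ^ 2 := by
      rw [hα]; ring_nf; rw [hα] at *; nlinarith [hsq]
    nlinarith [hs2]
  have hr0 : (‖x‖ ^ 2) ≠ 0 := by positivity
  set a := x 0 with ha
  set b := x 1 with hb
  have hr2 : ‖x‖ ^ 2 = a ^ 2 + b ^ 2 := norm_sq_fin2 x
  have hF0 : F x 0 = cos θ * a - sin θ * b := by rw [hF]; simp; rfl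
  have hF1 : F x 1 = sin θ * a + cos θ * b := by rw [hF]; simp; rfl
  have key2 : a ^ 2 + b ^ 2 = α ^ 2 + 2 * α * cos θ + 1 := by rw [← hr2]; exact key
  have hab0 : a ^ 2 + b ^ 2 ≠ 0 := by rw [← hr2]; exact hr0
  have hy0 : y 0 = (‖x‖ ^ 2)⁻¹ * (a + α * (cos θ * a - sin θ * b)) := by
    rw [hy]; simp [hF0]; ring
  rw [hr2] at hy0
  have hy1 : y 1 = (‖x‖ ^ 2)⁻¹ * (b + α * (sin θ * a + cos θ * b)) := by
    rw [hy]; simp [hF1]; ring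
  rw [hr2] at hy1
  have hynorm : ‖y‖ = 1 := by
    have h2 : ‖y‖ ^ 2 = 1 := by
      rw [norm_sq_fin2, hy0, hy1]
      field_simp
      linear_combination (-(a^2+b^2)) * key2 + α^2*(a^2+b^2) * hs2
    rw [← Real.sqrt_sq (norm_nonneg y), h2, Real.sqrt_one]
  refine ⟨hαpos, hynorm, ?_⟩
  have hFy0 : F y 0 = cos θ * y 0 - sin θ * y 1 := by rw [hF]; simp
  have hFy1 : F y 1 = sin θ * y 0 + cos θ * y 1 := by rw [hF]; simp
  ext i
  fin_cases i
  · show F x 0 = (α • y + F y) 0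
    simp only [PiLp.add_apply, PiLp.smul_apply, smul_eq_mul, hF0, hFy0, hy0, hy1]
    field_simp
    linear_combination (cos θ * a - sin θ * b) * key2 + α * a * hs2
  · show F x 1 = (α • y + F y) 1
    simp only [PiLp.add_apply, PiLp.smul_apply, smul_eq_mul, hF1, hFy1, hy0, hy1]
    field_simp
    linear_combination (sin θ * a + cos θ * b) * key2 + α * b * hs2
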